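/- Let R be Noetherian and R → S a faithfully flat Ohm-Rush algebra. Then S is a weak content R-algebra if and only if R → S is residually McCoy (R/I → S/IS is McCoy for all ideals I of R). -/

import Mathlib

/-- The Ohm-Rush content of `f ∈ S`: the intersection of all ideals `I` of `R`
with `f ∈ IS`. -/
def orContent (R : Type*) [CommRing R] {S : Type*} [CommRing S] [Algebra R S] (f : S) :
    Ideal R :=
  sInf {I : Ideal R | f ∈ I.map (algebraMap R S)}

/-- `S` is an Ohm-Rush `R`-algebra if each `f ∈ S` lies in `c(f)S`,
i.e. there is a minimal ideal `I` with `f ∈ IS`. -/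
def IsOhmRush (R S : Type*) [CommRing R] [CommRing S] [Algebra R S] : Prop :=
  ∀ f : S, f ∈ (orContent R f).map (algebraMap R S)

/-- `S` is a McCoy `R`-algebra if whenever `f * g = 0` with `g ≠ 0`,
some nonzero `r ∈ R` annihilates the content of `f`. -/
def IsMcCoy (R S : Type*) [CommRing R] [CommRing S] [Algebra R S] : Prop :=
  ∀ f g : S, f * g = 0 → g ≠ 0 → ∃ r : R, r ≠ 0 ∧ ∀ a ∈ orContent R f, r * a = 0

/-- `S` is a weak content `R`-algebra: Ohm-Rush and `rad c(fg) = rad (c(f)c(g))`. -/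
def IsWeakContent (R S : Type*) [CommRing R] [CommRing S] [Algebra R S] : Prop :=
  IsOhmRush R S ∧ ∀ f g : S,
    (orContent R (f * g)).radical = (orContent R f * orContent R g).radical

/-- Property (A): every finitely generated ideal consisting of zero-divisors
has a nonzero annihilator. -/
def HasPropertyA (R : Type*) [CommRing R] : Prop :=
  ∀ J : Ideal R, J.FG → (∀ a ∈ J, a ∉ nonZeroDivisors R) →
    ∃ r : R, r ≠ 0 ∧ ∀ a ∈ J, a * r = 0

/-- Fidel (A): every quotient has property (A). -/
def HasFidelA (R : Type*) [CommRing R] : Prop :=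
  ∀ I : Ideal R, HasPropertyA (R ⧸ I)

/-- `S` is a semicontent `R`-algebra: faithfully flat, Ohm-Rush, and for every
multiplicative set `W ⊆ R` meeting `c(f)`, `c(fg)` and `c(g)` agree after
localizing at `W`. -/
def IsSemicontent (R S : Type*) [CommRing R] [CommRing S] [Algebra R S] : Prop :=
  Module.FaithfullyFlat R S ∧ IsOhmRush R S ∧
    ∀ (W : Submonoid R) (f g : S), (∃ w ∈ W, w ∈ orContent R f) →
      (orContent R (f * g)).map (algebraMap R (Localization W)) =
        (orContent R g).map (algebraMap R (Localization W))

section helpers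

variable {R S : Type*} [CommRing R] [CommRing S] [Algebra R S]

theorem orContent_le_of_mem {f : S} {I : Ideal R} (h : f ∈ I.map (algebraMap R S)) :
    orContent R f ≤ I := sInf_le h

theorem mem_map_of_orContent_le (hOR : IsOhmRush R S) {f : S} {I : Ideal R}
    (h : orContent R f ≤ I) : f ∈ I.map (algebraMap R S) :=
  Ideal.map_mono h (hOR f)

theorem orContent_mul_le_left (hOR : IsOhmRush R S) (f g : S) :
    orContent R (f * g) ≤ orContent R f :=
  sInf_le (Ideal.mul_mem_right g _ (hOR f))

theorem orContent_mul_le_right (hOR : IsOhmRush R S) (f g : S) :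
    orContent R (f * g) ≤ orContent R g :=
  sInf_le (Ideal.mul_mem_left _ f (hOR g))

theorem mul_mem_map_of_forall {b : R} {C I : Ideal R} (h : ∀ x ∈ C, b * x ∈ I)
    {v : S} (hv : v ∈ C.map (algebraMap R S)) :
    algebraMap R S b * v ∈ I.map (algebraMap R S) := by
  have hle : C.map (algebraMap R S) ≤
      (I.map (algebraMap R S)).colon (Ideal.span {algebraMap R S b}) := by
    rw [Ideal.map_le_iff_le_comap]
    intro x hx
    rw [Ideal.mem_comap, Ideal.mem_colon_span_singleton, ← map_mul]
    exact Ideal.mem_map_of_mem _ (by rw [mul_comm]; exact h x hx)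
  have := hle hv
  rw [Ideal.mem_colon_span_singleton] at this
  rwa [mul_comm] at this

theorem flat_colon [Module.Flat R S] {I : Ideal R} {t : R} {s : S}
    (h : algebraMap R S t * s ∈ I.map (algebraMap R S)) :
    s ∈ (I.colon (Ideal.span {t})).map (algebraMap R S) := by
  set K := I.colon (Ideal.span {t}) with hK
  let φ : R →ₗ[R] R ⧸ I := (Submodule.mkQ (I : Submodule R R)) ∘ₗ (t • (LinearMap.id : R →ₗ[R] R))
  have hker : LinearMap.ker φ = (K : Submodule R R) := by
    ext x
    simp only [φ, LinearMap.mem_ker, LinearMap.comp_apply, LinearMap.smul_apply,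
      LinearMap.id_apply, Submodule.mkQ_apply, Submodule.Quotient.mk_eq_zero, hK]
    rw [Ideal.mem_colon_span_singleton, smul_eq_mul, mul_comm]
  have hexact : Function.Exact (Submodule.subtype (K : Submodule R R)) φ := by
    rw [LinearMap.exact_iff, hker, Submodule.range_subtype]
  have hexact2 := Module.Flat.lTensor_exact S hexact
  have key : ∀ u : S, u ∈ (I • (⊤ : Submodule R S)) →
      u ⊗ₜ[R] (Submodule.Quotient.mk (1:R) : R ⧸ (I : Submodule R R)) = 0 := by
    intro u hu
    refine Submodule.smul_induction_on hu ?_ ?_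
    · intro r hr n _
      rw [TensorProduct.smul_tmul]
      have h0 : r • (Submodule.Quotient.mk (1:R) : R ⧸ (I : Submodule R R)) = 0 := by
        rw [← Submodule.Quotient.mk_smul, Submodule.Quotient.mk_eq_zero]
        simpa using hr
      rw [h0, TensorProduct.tmul_zero]
    · intro x y hx hy; rw [TensorProduct.add_tmul, hx, hy, add_zero]
  have hts : t • s ∈ I • (⊤ : Submodule R S) := by
    rw [Ideal.smul_top_eq_map, Submodule.restrictScalars_mem, Algebra.smul_def]
    exact h
  have hzero : (LinearMap.lTensor S φ) (s ⊗ₜ[R] (1 : R)) = 0 := by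
    rw [LinearMap.lTensor_tmul]
    have : φ 1 = t • (Submodule.Quotient.mk (1:R) : R ⧸ (I : Submodule R R)) := by
      show Submodule.mkQ (I : Submodule R R) (t • (1:R)) = _
      rw [Submodule.mkQ_apply, Submodule.Quotient.mk_smul]
    rw [this, ← TensorProduct.smul_tmul, key _ hts]
  obtain ⟨z, hz⟩ := (hexact2 (s ⊗ₜ[R] (1:R))).mp hzero
  have hs : s = (TensorProduct.rid R S) ((LinearMap.lTensor S (Submodule.subtype (K : Submodule R R))) z) := by
    rw [hz, TensorProduct.rid_tmul, one_smul]
  have hmem : ∀ z : TensorProduct R S (K : Submodule R R),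
      (TensorProduct.rid R S) ((LinearMap.lTensor S (Submodule.subtype (K : Submodule R R))) z)
        ∈ K • (⊤ : Submodule R S) := by
    intro z
    induction z using TensorProduct.induction_on with
    | zero => simp
    | tmul x k =>
      rw [LinearMap.lTensor_tmul, TensorProduct.rid_tmul]
      exact Submodule.smul_mem_smul k.2 Submodule.mem_top
    | add x y hx hy => rw [map_add, map_add]; exact Submodule.add_mem _ hx hy
  have := hmem z
  rw [← hs, Ideal.smul_top_eq_map, Submodule.restrictScalars_mem] at this
  exact this

end helpers

section quot

variable {R S : Type*} [CommRing R] [CommRing S] [Algebra R S] (I : Ideal R)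

theorem comp_eq_quot :
    (algebraMap (R ⧸ I) (S ⧸ I.map (algebraMap R S))).comp (Ideal.Quotient.mk I)
      = (Ideal.Quotient.mk (I.map (algebraMap R S))).comp (algebraMap R S) := rfl

theorem map_map_quot (J : Ideal R) :
    (J.map (Ideal.Quotient.mk I)).map (algebraMap (R ⧸ I) (S ⧸ I.map (algebraMap R S)))
      = (J.map (algebraMap R S)).map (Ideal.Quotient.mk (I.map (algebraMap R S))) := by
  rw [Ideal.map_map, Ideal.map_map, comp_eq_quot]

theorem quotContent_le (hOR : IsOhmRush R S) (f : S) :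
    orContent (R ⧸ I) (Ideal.Quotient.mk (I.map (algebraMap R S)) f)
      ≤ (orContent R f ⊔ I).map (Ideal.Quotient.mk I) := by
  apply sInf_le
  show _ ∈ Ideal.map _ _
  rw [map_map_quot]
  exact Ideal.mem_map_of_mem _ (Ideal.map_mono le_sup_left (hOR f))

theorem quotContent_ge (f : S) :
    (orContent R f ⊔ I).map (Ideal.Quotient.mk I)
      ≤ orContent (R ⧸ I) (Ideal.Quotient.mk (I.map (algebraMap R S)) f) := by
  apply le_sInf
  rintro J' hJ'
  set J := J'.comap (Ideal.Quotient.mk I) with hJdef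
  have hIJ : I ≤ J := fun x hx => by
    show Ideal.Quotient.mk I x ∈ J'
    rw [Ideal.Quotient.eq_zero_iff_mem.mpr hx]
    exact J'.zero_mem
  have hJ'eq : J.map (Ideal.Quotient.mk I) = J' :=
    Ideal.map_comap_of_surjective _ Ideal.Quotient.mk_surjective _
  have hf : f ∈ J.map (algebraMap R S) := by
    have hm : Ideal.Quotient.mk (I.map (algebraMap R S)) f
        ∈ (J.map (algebraMap R S)).map (Ideal.Quotient.mk (I.map (algebraMap R S))) := by
      rw [← map_map_quot, hJ'eq]; exact hJ'
    obtain ⟨y, hy, hyf⟩ := Ideal.mem_map_iff_of_surjective _ Ideal.Quotient.mk_surjective |>.mp hm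
    have : f - y ∈ I.map (algebraMap R S) := by
      rw [← Ideal.Quotient.mk_eq_mk_iff_sub_mem, hyf]
    have : f - y ∈ J.map (algebraMap R S) := Ideal.map_mono hIJ this
    simpa using Submodule.add_mem _ hy this
  have : orContent R f ⊔ I ≤ J := sup_le (sInf_le hf) hIJ
  calc (orContent R f ⊔ I).map (Ideal.Quotient.mk I) ≤ J.map (Ideal.Quotient.mk I) :=
        Ideal.map_mono this
    _ = J' := hJ'eq

end quot

section key

variable {R S : Type*} [CommRing R] [CommRing S] [Algebra R S]

theorem key_lemma [IsNoetherianRing R] [Module.Flat R S]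
    (hOR : IsOhmRush R S)
    (hWC : ∀ f g : S, (orContent R (f * g)).radical = (orContent R f * orContent R g).radical)
    (I : Ideal R) :
    ∀ f g : S, ∀ b : R, b ∈ orContent R f → f * g ∈ I.map (algebraMap R S) →
      ∃ n : ℕ, (algebraMap R S b) ^ n * g ∈ I.map (algebraMap R S) := by
  have step : ∀ I : Ideal R, (∀ J : Ideal R, I < J → (∀ f g : S, ∀ b : R,
      b ∈ orContent R f → f * g ∈ J.map (algebraMap R S) →
      ∃ n : ℕ, (algebraMap R S b) ^ n * g ∈ J.map (algebraMap R S))) → ∀ f g : S, ∀ b : R,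
      b ∈ orContent R f → f * g ∈ I.map (algebraMap R S) →
      ∃ n : ℕ, (algebraMap R S b) ^ n * g ∈ I.map (algebraMap R S) := by
    clear I
    intro I IH f g b hb hfg
    rcases eq_or_lt_of_le I.le_radical with hrad | hrad
    · -- I is radical
      refine ⟨1, ?_⟩
      rw [pow_one]
      refine mul_mem_map_of_forall (fun x hx => ?_) (hOR g)
      have h1 : b * x ∈ orContent R f * orContent R g := Ideal.mul_mem_mul hb hx
      have h2 : b * x ∈ (orContent R (f * g)).radical := by
        rw [hWC f g]; exact Ideal.le_radical h1
      have h3 : (orContent R (f * g)).radical ≤ I.radical :=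
        Ideal.radical_mono (sInf_le hfg)
      rw [hrad]
      exact h3 h2
    · -- I < I.radical
      obtain ⟨t, htI, ht⟩ : ∃ t, t ∉ I ∧ ∀ x ∈ I.radical, t * x ∈ I := by
        have hfg' : ∃ n, I.radical ^ n ≤ I :=
          Ideal.exists_radical_pow_le_of_fg I (IsNoetherian.noetherian _)
        classical
        set n := Nat.find hfg' with hn
        have hnle : I.radical ^ n ≤ I := Nat.find_spec hfg'
        have hn2 : 2 ≤ n := by
          by_contra hc
          push_neg at hc
          interval_cases n
          · rename_i h0
            rw [pow_zero, Ideal.one_eq_top, top_le_iff] at hnle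
            have : I.radical = I := le_antisymm (by rw [hnle]; exact le_top) I.le_radical
            exact absurd (hrad.trans_le this.le) (lt_irrefl _)
          · rw [pow_one] at hnle
            exact absurd (hrad.trans_le hnle) (lt_irrefl _)
        have hprev : ¬ I.radical ^ (n - 1) ≤ I := Nat.find_min hfg' (by omega)
        obtain ⟨t, htmem, htI⟩ := SetLike.not_le_iff_exists.mp hprev
        refine ⟨t, htI, fun x hx => ?_⟩
        have hmm : t * x ∈ I.radical ^ (n - 1) * I.radical := Ideal.mul_mem_mul htmem hx
        rw [← pow_succ, Nat.sub_add_cancel (by omega)] at hmm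
        exact hnle hmm
      -- J = I ⊔ span {t}
      have hJ : I < I ⊔ Ideal.span {t} := by
        refine lt_of_le_of_ne le_sup_left fun hc => htI ?_
        rw [hc]
        exact Submodule.mem_sup_right (Ideal.mem_span_singleton_self t)
      obtain ⟨n, hn⟩ := IH _ hJ f g b hb (Ideal.map_mono le_sup_left hfg)
      rw [Ideal.map_sup] at hn
      obtain ⟨u, hu, v, hv, huv⟩ := Submodule.mem_sup.mp hn
      rw [Ideal.map_span, Set.image_singleton] at hv
      obtain ⟨h, hh⟩ := Ideal.mem_span_singleton'.mp hv
      -- t * (f * h) ∈ I S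
      have hfv : f * v ∈ I.map (algebraMap R S) := by
        have h1 : f * ((algebraMap R S b) ^ n * g) ∈ I.map (algebraMap R S) := by
          have he : f * ((algebraMap R S b) ^ n * g) = (algebraMap R S b) ^ n * (f * g) := by
            ring
          rw [he]
          exact Ideal.mul_mem_left _ _ hfg
        have h2 : f * u ∈ I.map (algebraMap R S) := Ideal.mul_mem_left _ _ hu
        have he2 : f * v = f * ((algebraMap R S b) ^ n * g) - f * u := by rw [← huv]; ring
        rw [he2]
        exact Submodule.sub_mem _ h1 h2
      have hfh : algebraMap R S t * (f * h) ∈ I.map (algebraMap R S) := by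
        have he : algebraMap R S t * (f * h) = f * v := by rw [← hh]; ring
        rwa [he]
      -- K = I.colon (span {t})
      set K := I.colon (Ideal.span {t}) with hKdef
      have hIK : I < K := by
        refine lt_of_le_of_ne
          (fun x hx => Ideal.mem_colon_span_singleton.mpr (Ideal.mul_mem_right t I hx))
          fun hc => ?_
        obtain ⟨x, hx, hxI⟩ := SetLike.not_le_iff_exists.mp (not_le_of_gt hrad)
        exact hxI (hc ▸ Ideal.mem_colon_span_singleton.mpr (by rw [mul_comm]; exact ht x hx))
      have hfhK : f * h ∈ K.map (algebraMap R S) := flat_colon hfh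
      obtain ⟨m, hm⟩ := IH _ hIK f h b hb hfhK
      refine ⟨n + m, ?_⟩
      have hKt : ∀ x ∈ K, t * x ∈ I := fun x hx => by
        rw [mul_comm]; exact Ideal.mem_colon_span_singleton.mp hx
      have hterm2 : algebraMap R S t * ((algebraMap R S b) ^ m * h) ∈ I.map (algebraMap R S) :=
        mul_mem_map_of_forall hKt hm
      have heq : (algebraMap R S b) ^ (n + m) * g
          = (algebraMap R S b) ^ m * u + algebraMap R S t * ((algebraMap R S b) ^ m * h) := by
        rw [pow_add]
        calc (algebraMap R S b) ^ n * (algebraMap R S b) ^ m * g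
            = (algebraMap R S b) ^ m * ((algebraMap R S b) ^ n * g) := by ring
          _ = (algebraMap R S b) ^ m * (u + v) := by rw [huv]
          _ = (algebraMap R S b) ^ m * u + (algebraMap R S b) ^ m * (h * algebraMap R S t) := by
              rw [hh]; ring
          _ = (algebraMap R S b) ^ m * u + algebraMap R S t * ((algebraMap R S b) ^ m * h) := by
              ring
      rw [heq]
      exact Submodule.add_mem _ (Ideal.mul_mem_left _ _ hu) hterm2
  exact IsNoetherian.induction (fun I IH => step I IH) I

end key

section propA

theorem exists_ann_of_zerodivisors {R' : Type*} [CommRing R'] [IsNoetherianRing R']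
    [Nontrivial R'] (J : Ideal R') (hJ : ∀ a ∈ J, ∃ x : R', x ≠ 0 ∧ a * x = 0) :
    ∃ r : R', r ≠ 0 ∧ ∀ a ∈ J, a * r = 0 := by
  classical
  obtain ⟨s, hsinf, hsprim, _, hmin⟩ := Ideal.IsLasker.minimal (Ideal.isLasker R' R') ⊥
  have hsne : s.Nonempty := by
    rcases Finset.eq_empty_or_nonempty s with rfl | h
    · exfalso
      rw [Finset.inf_empty] at hsinf
      have h1 : (1 : R') ∈ (⊥ : Ideal R') := by rw [← hsinf]; exact Submodule.mem_top
      rw [Ideal.mem_bot] at h1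
      exact one_ne_zero h1
    · exact h
  have hcov : (J : Set R') ⊆ ⋃ Q ∈ (s : Set (Ideal R')), ((Q.radical : Ideal R') : Set R') := by
    intro a ha
    obtain ⟨x, hx0, hax⟩ := hJ a ha
    have hxnot : ∃ Q ∈ s, x ∉ Q := by
      by_contra hc
      push_neg at hc
      have hx : x ∈ s.inf id := Submodule.mem_finsetInf.mpr fun i hi => hc i hi
      rw [hsinf] at hx
      exact hx0 (by simpa using hx)
    obtain ⟨Q, hQs, hxQ⟩ := hxnot
    have hmem : x * a ∈ Q := by
      rw [mul_comm, hax]; exact Q.zero_mem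
    have := ((Ideal.isPrimary_iff.mp (hsprim hQs)).2 hmem).resolve_left hxQ
    exact Set.mem_biUnion hQs this
  obtain ⟨i0, hi0⟩ := hsne
  have hp : ∀ Q ∈ s, Q ≠ i0 → Q ≠ i0 →
      ((fun Q : Ideal R' => Q.radical) Q).IsPrime := fun Q hQ _ _ =>
    Ideal.isPrime_radical (hsprim hQ)
  obtain ⟨Q, hQs, hJQ⟩ := (Ideal.subset_union_prime i0 i0 hp).mp hcov
  obtain ⟨x, hxT, hxQ⟩ := SetLike.not_le_iff_exists.mp (hmin hQs)
  have hx0 : x ≠ 0 := fun h => hxQ (h ▸ Q.zero_mem)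
  obtain ⟨k, hk⟩ := Ideal.exists_radical_pow_le_of_fg Q (IsNoetherian.noetherian _)
  have hTQ : ∀ y ∈ Ideal.radical Q ^ k, y * x = 0 := by
    intro y hy
    have hyx : y * x ∈ s.inf id := by
      refine Submodule.mem_finsetInf.mpr fun i hi => ?_
      rcases eq_or_ne i Q with rfl | hne
      · exact Ideal.mul_mem_right x _ (hk hy)
      · have hle : (s.erase Q).inf id ≤ id i := Finset.inf_le (Finset.mem_erase.mpr ⟨hne, hi⟩)
        exact Ideal.mul_mem_left _ y (hle hxT)
    rw [hsinf] at hyx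
    simpa using hyx
  have hΦ : ∃ m, ∀ c ∈ Ideal.radical Q ^ m, c * x = 0 := ⟨k, hTQ⟩
  set m := Nat.find hΦ with hmdef
  have hm : ∀ c ∈ Ideal.radical Q ^ m, c * x = 0 := Nat.find_spec hΦ
  have hm1 : 1 ≤ m := by
    rcases Nat.eq_zero_or_pos m with h0 | h
    · exfalso
      have h1 : (1 : R') ∈ Ideal.radical Q ^ m := by
        rw [h0, pow_zero, Ideal.one_eq_top]; exact Submodule.mem_top
      have := hm 1 h1
      rw [one_mul] at this
      exact hx0 this
    · exact h
  have hprev : ¬ ∀ c ∈ Ideal.radical Q ^ (m - 1), c * x = 0 := Nat.find_min hΦ (by omega)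
  push_neg at hprev
  obtain ⟨c, hc, hcx⟩ := hprev
  refine ⟨c * x, hcx, fun a ha => ?_⟩
  have haQ : a ∈ Ideal.radical Q := hJQ ha
  have hac : a * c ∈ Ideal.radical Q ^ m := by
    have h2 := Ideal.mul_mem_mul haQ hc
    rwa [← pow_succ', Nat.sub_add_cancel hm1] at h2
  calc a * (c * x) = (a * c) * x := by ring
    _ = 0 := hm _ hac

end propA


/-- Let `R` be Noetherian and `R → S` a faithfully flat Ohm-Rush algebra. Then
`S` is a weak content `R`-algebra iff `R → S` is residually McCoy. -/
theorem stmt_14 (R S : Type*) [CommRing R] [CommRing S] [Algebra R S]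
    [IsNoetherianRing R] [Module.FaithfullyFlat R S]
    (hOR : IsOhmRush R S) :
    IsWeakContent R S ↔
      ∀ I : Ideal R, IsMcCoy (R ⧸ I) (S ⧸ I.map (algebraMap R S)) := by
  constructor
  · rintro ⟨hOR', hWC⟩ I fb gb hfgb hgb
    obtain ⟨f, rfl⟩ := Ideal.Quotient.mk_surjective fb
    obtain ⟨g, rfl⟩ := Ideal.Quotient.mk_surjective gb
    have hfg : f * g ∈ I.map (algebraMap R S) := by
      rw [← Ideal.Quotient.eq_zero_iff_mem, map_mul]; exact hfgb
    have hgI : g ∉ I.map (algebraMap R S) := fun hc =>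
      hgb (Ideal.Quotient.eq_zero_iff_mem.mpr hc)
    have hIne : I ≠ ⊤ := by
      rintro rfl
      exact hgI (by rw [Ideal.map_top]; exact Submodule.mem_top)
    haveI : Nontrivial (R ⧸ I) := Ideal.Quotient.nontrivial_iff.mpr hIne
    set Jb := (orContent R f ⊔ I).map (Ideal.Quotient.mk I) with hJbdef
    have hZD : ∀ a ∈ Jb, ∃ x : R ⧸ I, x ≠ 0 ∧ a * x = 0 := by
      intro a ha
      by_contra hcon
      push_neg at hcon
      obtain ⟨b', hb', hb'a⟩ :=
        (Ideal.mem_map_iff_of_surjective _ Ideal.Quotient.mk_surjective).mp ha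
      obtain ⟨b, hbcf, i, hiI, rfl⟩ := Submodule.mem_sup.mp hb'
      have hmkb : Ideal.Quotient.mk I b = a := by
        rw [← hb'a, map_add, Ideal.Quotient.eq_zero_iff_mem.mpr hiI, add_zero]
      have hreg : ∀ x : R ⧸ I, a * x = 0 → x = 0 := by
        intro x hx
        by_contra hx0
        exact hcon x hx0 hx
      have hregpow : ∀ n : ℕ, ∀ y : R ⧸ I, y * a ^ n = 0 → y = 0 := by
        intro n
        induction n with
        | zero => intro y hy; simpa using hy
        | succ n ih =>
          intro y hy
          have h1 : a * (y * a ^ n) = 0 := by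
            rw [← hy]; ring
          exact ih y (hreg _ h1)
      obtain ⟨n, hn⟩ := key_lemma hOR' hWC I f g b hbcf hfg
      have hbn : algebraMap R S (b ^ n) * g ∈ I.map (algebraMap R S) := by rwa [map_pow]
      have hgK : g ∈ (I.colon (Ideal.span {b ^ n})).map (algebraMap R S) := flat_colon hbn
      have hKI : I.colon (Ideal.span {b ^ n}) ≤ I := by
        intro x hx
        rw [Ideal.mem_colon_span_singleton] at hx
        have hz : Ideal.Quotient.mk I (x * b ^ n) = 0 := Ideal.Quotient.eq_zero_iff_mem.mpr hx
        rw [map_mul, map_pow, hmkb] at hz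
        have := hregpow n _ hz
        rwa [Ideal.Quotient.eq_zero_iff_mem] at this
      exact hgI (Ideal.map_mono hKI hgK)
    obtain ⟨r, hr0, hr⟩ := exists_ann_of_zerodivisors Jb hZD
    refine ⟨r, hr0, fun a ha => ?_⟩
    have haJ : a ∈ Jb := quotContent_le I hOR' f ha
    rw [mul_comm]
    exact hr a haJ
  · intro hMc
    refine ⟨hOR, fun f g => ?_⟩
    apply le_antisymm
    · have h1 : orContent R (f * g) ≤ (orContent R f * orContent R g).radical := by
        intro x hx
        exact Ideal.mem_radical_iff.mpr ⟨2, by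
          rw [pow_two]
          exact Ideal.mul_mem_mul (orContent_mul_le_left hOR f g hx)
            (orContent_mul_le_right hOR f g hx)⟩
      calc (orContent R (f * g)).radical
          ≤ (orContent R f * orContent R g).radical.radical := Ideal.radical_mono h1
        _ = _ := Ideal.radical_idem _
    · have h1 : orContent R f * orContent R g ≤ (orContent R (f * g)).radical := by
        rw [Ideal.radical_eq_sInf]
        refine le_sInf ?_
        rintro P ⟨hPfg, hP⟩
        haveI := hP
        have hfgP : f * g ∈ P.map (algebraMap R S) := mem_map_of_orContent_le hOR hPfg
        by_cases hg0 : Ideal.Quotient.mk (P.map (algebraMap R S)) g = 0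
        · have hcgP : orContent R g ≤ P :=
            orContent_le_of_mem (Ideal.Quotient.eq_zero_iff_mem.mp hg0)
          exact Ideal.mul_le.mpr fun x _ y hy => P.mul_mem_left x (hcgP hy)
        · obtain ⟨r, hr0, hr⟩ := hMc P (Ideal.Quotient.mk (P.map (algebraMap R S)) f)
            (Ideal.Quotient.mk (P.map (algebraMap R S)) g)
            (by rw [← map_mul]; exact Ideal.Quotient.eq_zero_iff_mem.mpr hfgP) hg0
          have hcfP : orContent R f ≤ P := by
            intro b hb
            have hbc : Ideal.Quotient.mk P b
                ∈ orContent (R ⧸ P) (Ideal.Quotient.mk (P.map (algebraMap R S)) f) :=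
              quotContent_ge P f (Ideal.mem_map_of_mem _ (Submodule.mem_sup_left hb))
            have hz := hr _ hbc
            rcases mul_eq_zero.mp hz with h | h
            · exact absurd h hr0
            · exact Ideal.Quotient.eq_zero_iff_mem.mp h
          exact Ideal.mul_le.mpr fun x hx y _ => P.mul_mem_right y (hcfP hx)
      calc (orContent R f * orContent R g).radical
          ≤ (orContent R (f * g)).radical.radical := Ideal.radical_mono h1
        _ = _ := Ideal.radical_idem _
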